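/- Let X and Y be finite sets and a : Y ⇀ X a partial function. Then the number of idempotents of the sandwich semigroup PT_XY^a, i.e., the number of partial functions f : X ⇀ Y with f⬝a⬝f = f, equals Σ_{S ⊆ ran(a)} (|S|+1)^{|X|−|S|} · Π_{x ∈ S} |{y ∈ dom(a) : a(y) = x}|, where the sum is over all subsets S of ran(a). -/

import Mathlib

attribute [local instance] Classical.propDecidable

namespace Statement14

variable {X Y : Type*}

/-- Option version of a partial function. -/
noncomputable def A (a : Y →. X) : Y → Option X := fun y => (a y).toOption

lemma A_eq_some_iff (a : Y →. X) {y : Y} {x : X} : A a y = some x ↔ x ∈ a y :=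
  Part.toOption_eq_some_iff

/-- The idempotency condition in `Option` form. -/
def Q (a : Y →. X) (F : X → Option Y) : Prop :=
  ∀ x, ((F x).bind (A a)).bind F = F x

lemma toOption_bind {α β : Type*} (p : Part α) (q : α → Part β) :
    (p.bind q).toOption = (p.toOption).bind fun a => (q a).toOption := by
  classical
  by_cases h : p.Dom
  · rw [Part.Dom.toOption h, Option.bind_some]
    conv_lhs => rw [← Part.some_get h]
    rw [Part.bind_some]
  · rw [Part.toOption_eq_none_iff.2 h, Option.bind_none]
    exact Part.toOption_eq_none_iff.2 (fun hd => h hd.1)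

lemma idem_iff (a : Y →. X) (f : X →. Y) :
    f.comp (a.comp f) = f ↔ Q a (fun x => (f x).toOption) := by
  classical
  have hcomp : ∀ x, (f.comp (a.comp f)) x = ((f x).bind a).bind f := by
    intro x
    simp [PFun.comp_apply]
  constructor
  · intro h x
    have hx : (((f x).bind a).bind f) = f x := by rw [← hcomp x, h]
    calc ((((f x).toOption).bind (A a)).bind fun x => (f x).toOption)
        = (((f x).bind a).bind f).toOption := by
          rw [toOption_bind ((f x).bind a) f, toOption_bind (f x) a]; rfl
      _ = (f x).toOption := by rw [hx]
  · intro h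
    funext x
    have h2 : (((f x).bind a).bind f).toOption = (f x).toOption := by
      rw [toOption_bind ((f x).bind a) f, toOption_bind (f x) a]
      exact h x
    have := congrArg Part.ofOption h2
    rwa [Part.of_toOption, Part.of_toOption, ← hcomp x] at this


section Main
variable [Fintype X] [Fintype Y]

/-- Parameter type: a subset `S`, a choice of "no-value-or-value-in-S" for points outside `S`,
and a section of `a` on `S`. -/
abbrev Param (a : Y →. X) : Type _ :=
  Σ S : Finset X,
    ({x : X // x ∉ S} → Option {x : X // x ∈ S}) ×
    ((x : {x : X // x ∈ S}) → {y : Y // (x : X) ∈ a y})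

noncomputable def fwd (a : Y →. X) (p : Param a) : X → Option Y := fun x =>
  if h : x ∈ p.1 then some (p.2.2 ⟨x, h⟩ : Y)
  else (p.2.1 ⟨x, h⟩).map fun s => (p.2.2 s : Y)

lemma fwd_mem (a : Y →. X) (p : Param a) {x : X} (h : x ∈ p.1) :
    fwd a p x = some (p.2.2 ⟨x, h⟩ : Y) := dif_pos h

lemma fwd_not_mem (a : Y →. X) (p : Param a) {x : X} (h : x ∉ p.1) :
    fwd a p x = (p.2.1 ⟨x, h⟩).map fun s => (p.2.2 s : Y) := dif_neg h

lemma fwd_Q (a : Y →. X) (p : Param a) : Q a (fwd a p) := by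
  intro x
  by_cases h : x ∈ p.1
  · rw [fwd_mem a p h, Option.bind_some, A_eq_some_iff a |>.2 (p.2.2 ⟨x, h⟩).2,
      Option.bind_some, fwd_mem a p h]
  · rw [fwd_not_mem a p h]
    cases hτ : p.2.1 ⟨x, h⟩ with
    | none => simp
    | some s =>
      rw [Option.map_some, Option.bind_some, A_eq_some_iff a |>.2 (p.2.2 s).2,
        Option.bind_some, fwd_mem a p s.2]

/-- Recover the subset `S` from an idempotent. -/
noncomputable def Sof (a : Y →. X) (F : X → Option Y) : Finset X :=
  Finset.univ.filter fun x => ((F x).bind (A a)) = some x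

lemma mem_Sof (a : Y →. X) (F : X → Option Y) {x : X} :
    x ∈ Sof a F ↔ ((F x).bind (A a)) = some x := by
  simp [Sof]

lemma Sof_fwd (a : Y →. X) (p : Param a) : Sof a (fwd a p) = p.1 := by
  ext x
  rw [mem_Sof]
  by_cases h : x ∈ p.1
  · simp only [h, iff_true]
    rw [fwd_mem a p h, Option.bind_some, A_eq_some_iff a |>.2 (p.2.2 ⟨x, h⟩).2]
  · simp only [h, iff_false]
    rw [fwd_not_mem a p h]
    cases hτ : p.2.1 ⟨x, h⟩ with
    | none => simp
    | some s =>
      rw [Option.map_some, Option.bind_some, A_eq_some_iff a |>.2 (p.2.2 s).2]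
      intro hc
      exact h ((Option.some.inj hc) ▸ s.2)

lemma fwd_injective (a : Y →. X) : Function.Injective (fwd a) := by
  intro p q h
  obtain ⟨Sp, τp, σp⟩ := p
  obtain ⟨Sq, τq, σq⟩ := q
  have hS : Sp = Sq := by
    have := Sof_fwd a ⟨Sp, τp, σp⟩
    rw [h, Sof_fwd a ⟨Sq, τq, σq⟩] at this
    exact this.symm
  subst hS
  have hσ : σp = σq := by
    funext x
    have hx := congrFun h x.1
    rw [fwd_mem a ⟨Sp, τp, σp⟩ x.2, fwd_mem a ⟨Sp, τq, σq⟩ x.2] at hx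
    exact Subtype.ext (Option.some.inj hx)
  subst hσ
  have hτ : τp = τq := by
    funext x
    have hx := congrFun h x.1
    rw [fwd_not_mem a ⟨Sp, τp, σp⟩ x.2, fwd_not_mem a ⟨Sp, τq, σp⟩ x.2] at hx
    refine Option.map_injective ?_ hx
    intro s t hst
    dsimp only at hst
    have : A a (σp s).1 = A a (σp t).1 := by rw [hst]
    rw [A_eq_some_iff a |>.2 (σp s).2, A_eq_some_iff a |>.2 (σp t).2] at this
    exact Subtype.ext (Option.some.inj this)
  rw [hτ]

lemma fwd_surjective (a : Y →. X) {F : X → Option Y} (hQ : Q a F) :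
    ∃ p : Param a, fwd a p = F := by
  classical
  set S := Sof a F with hSdef
  -- for x ∈ S there is a section value
  have hσ : ∀ x : {x : X // x ∈ S}, ∃ y, F x.1 = some y ∧ (x : X) ∈ a y := by
    rintro ⟨x, hx⟩
    rw [hSdef, mem_Sof] at hx
    cases hFx : F x with
    | none => rw [hFx, Option.bind_none] at hx; exact absurd hx (by simp)
    | some y =>
      rw [hFx, Option.bind_some] at hx
      exact ⟨y, rfl, (A_eq_some_iff a).1 hx⟩
  choose σ hσ1 hσ2 using hσ
  -- the key structural fact
  have key : ∀ x y, F x = some y →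
      ∃ s, (F x).bind (A a) = some s ∧ F s = some y ∧ s ∈ S := by
    intro x y hxy
    have hq := hQ x
    rw [hxy, Option.bind_some] at hq
    cases hA : A a y with
    | none => rw [hA, Option.bind_none] at hq; exact absurd hq.symm (by simp)
    | some s =>
      rw [hA, Option.bind_some] at hq
      refine ⟨s, by rw [hxy, Option.bind_some, hA], hq, ?_⟩
      rw [hSdef, mem_Sof, hq, Option.bind_some, hA]
  let τ : {x : X // x ∉ S} → Option {x : X // x ∈ S} := fun x =>
    if h : ∃ s : {s : X // s ∈ S}, (F x.1).bind (A a) = some s.1 then some h.choose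
    else none
  refine ⟨⟨S, τ, fun x => ⟨σ x, hσ2 x⟩⟩, ?_⟩
  funext x
  by_cases h : x ∈ S
  · rw [fwd_mem a _ h]
    exact (hσ1 ⟨x, h⟩).symm
  · rw [fwd_not_mem a _ h]
    cases hFx : F x with
    | none =>
      have : ¬∃ s : {s : X // s ∈ S}, (F x).bind (A a) = some s.1 := by
        rw [hFx, Option.bind_none]; simp
      show (τ ⟨x, h⟩).map _ = _
      rw [show τ ⟨x, h⟩ = none from dif_neg this]
      rfl
    | some y =>
      obtain ⟨s, hs1, hs2, hs3⟩ := key x y hFx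
      have hex : ∃ s : {s : X // s ∈ S}, (F x).bind (A a) = some s.1 := ⟨⟨s, hs3⟩, hs1⟩
      show (τ ⟨x, h⟩).map _ = _
      rw [show τ ⟨x, h⟩ = some hex.choose from dif_pos hex]
      have hcs : (hex.choose : X) = s :=
        (Option.some.inj (hs1.symm.trans hex.choose_spec)).symm
      have h1 : F (hex.choose : X) = some y := by rw [hcs]; exact hs2
      have h2 : σ hex.choose = y := Option.some.inj ((hσ1 hex.choose).symm.trans h1)
      rw [Option.map_some]
      dsimp only
      rw [h2]


lemma card_Q (a : Y →. X) : Nat.card {F : X → Option Y // Q a F} = Nat.card (Param a) :=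
  (Nat.card_eq_of_bijective (fun p => (⟨fwd a p, fwd_Q a p⟩ : {F : X → Option Y // Q a F}))
    ⟨fun p q h => fwd_injective a (congrArg Subtype.val h),
     fun F => (fwd_surjective a F.2).imp fun _ hp => Subtype.ext hp⟩).symm

lemma card_Param (a : Y →. X) :
    Nat.card (Param a) =
      ∑ S : Finset X, (S.card + 1) ^ (Fintype.card X - S.card) *
        ∏ x ∈ S, Nat.card {y : Y // x ∈ a y} := by
  classical
  rw [Nat.card_eq_fintype_card, Fintype.card_sigma]
  refine Finset.sum_congr rfl fun S _ => ?_
  rw [Fintype.card_prod]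
  congr 1
  · rw [Fintype.card_fun, Fintype.card_option]
    congr 1
    · rw [Fintype.card_coe]
    · rw [Fintype.card_subtype_compl, Fintype.card_coe]
  · rw [Fintype.card_pi, ← Finset.prod_coe_sort S (fun x => Nat.card {y : Y // x ∈ a y})]
    exact Finset.prod_congr rfl fun x _ => (Nat.card_eq_fintype_card).symm

end Main

lemma toOption_ofOption' {α : Type*} (o : Option α) (i : Decidable (Part.ofOption o).Dom) :
    @Part.toOption _ (Part.ofOption o) i = o := by
  rcases o with _ | y
  · exact (@Part.toOption_eq_none_iff _ _ i).2 (by simp)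
  · exact (@Part.toOption_eq_some_iff _ _ i _).2 (by simp)

noncomputable def equivQ (a : Y →. X) :
    {f : X →. Y // f.comp (a.comp f) = f} ≃ {F : X → Option Y // Q a F} where
  toFun f := ⟨fun x => (f.1 x).toOption, (idem_iff a f.1).1 f.2⟩
  invFun F := ⟨fun x => Part.ofOption (F.1 x), by
    have hh : (fun x => @Part.toOption _ (Part.ofOption (F.1 x)) (Classical.propDecidable _))
        = F.1 := funext fun x => toOption_ofOption' (F.1 x) _
    exact (idem_iff a _).2 (by rw [hh]; exact F.2)⟩
  left_inv f := Subtype.ext (funext fun x => Part.of_toOption _)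
  right_inv F := Subtype.ext (funext fun x => toOption_ofOption' (F.1 x) _)

end Statement14

/-- For finite `X`, `Y` and `a : Y ⇀ X`, the number of idempotents of the
sandwich semigroup `PT_XY^a` (partial functions `f : X ⇀ Y` with `f⬝a⬝f = f`) equals
`Σ_{S ⊆ ran a} (|S|+1)^{|X|−|S|} · Π_{x ∈ S} |a⁻¹(x)|`. -/
theorem card_idempotents_PTXYa {X Y : Type*} [Fintype X] [Fintype Y] (a : Y →. X) :
    Nat.card {f : X →. Y // f.comp (a.comp f) = f} =
      ∑ S ∈ (a.ran.toFinite.toFinset).powerset,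
        (S.card + 1) ^ (Fintype.card X - S.card) *
          ∏ x ∈ S, Nat.card {y : Y // x ∈ a y} := by
  classical
  rw [Nat.card_congr (Statement14.equivQ a), Statement14.card_Q a, Statement14.card_Param a]
  refine (Finset.sum_subset (Finset.subset_univ _) ?_).symm
  intro S _ hS
  rw [Finset.mem_powerset] at hS
  obtain ⟨x, hxS, hxR⟩ := Finset.not_subset.1 hS
  have hempty : IsEmpty {y : Y // x ∈ a y} := by
    refine ⟨fun y => hxR ?_⟩
    rw [Set.Finite.mem_toFinset]
    exact ⟨y.1, y.2⟩
  rw [Finset.prod_eq_zero hxS (Nat.card_of_isEmpty), mul_zero]
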